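/- Under LICQ on the active set E, the value function of the mpQP restricted to the critical region is the quadratic V(x) = ½ (W_E + S_E x)ᵀ (G_E H⁻¹ G_Eᵀ)⁻¹ (W_E + S_E x), and its gradient is ∇ₓV(x) = S_Eᵀ (G_E H⁻¹ G_Eᵀ)⁻¹ (W_E + S_E x) = −S_Eᵀ λ_E*(x). -/

import Mathlib

open Matrix

/-- Under LICQ on the active set `E`, the value function of the mpQP on the
critical region is the quadratic
`V(x) = ½ (W_E + S_E x)ᵀ (G_E H⁻¹ G_Eᵀ)⁻¹ (W_E + S_E x)`, and its gradient is
`∇ₓV(x) = S_Eᵀ (G_E H⁻¹ G_Eᵀ)⁻¹ (W_E + S_E x) = -S_Eᵀ λ_E*(x)`. -/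
theorem qp_value_function_quadratic (s n e : ℕ)
    (H : Matrix (Fin s) (Fin s) ℝ)
    (GE : Matrix (Fin e) (Fin s) ℝ) (WE : Fin e → ℝ) (SE : Matrix (Fin e) (Fin n) ℝ)
    (hH : H.PosDef) (hHsymm : H.IsSymm)
    (hLICQ : IsUnit (GE * H⁻¹ * GEᵀ))
    (zstar : (Fin n → ℝ) → (Fin s → ℝ))
    (hzstar : zstar = fun x =>
      H⁻¹.mulVec (GEᵀ.mulVec ((GE * H⁻¹ * GEᵀ)⁻¹.mulVec (WE + SE.mulVec x))))
    (lamE : (Fin n → ℝ) → (Fin e → ℝ))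
    (hlamE : lamE = fun x => -((GE * H⁻¹ * GEᵀ)⁻¹.mulVec (WE + SE.mulVec x)))
    (V : (Fin n → ℝ) → ℝ)
    (hV : V = fun x => (1/2) * (zstar x ⬝ᵥ H.mulVec (zstar x))) :
    ∀ x : Fin n → ℝ,
      V x = (1/2) * ((WE + SE.mulVec x) ⬝ᵥ (GE * H⁻¹ * GEᵀ)⁻¹.mulVec (WE + SE.mulVec x)) ∧
      (∃ L : (Fin n → ℝ) →L[ℝ] ℝ, HasFDerivAt V L x ∧
        ∀ w : Fin n → ℝ,
          L w = (SEᵀ.mulVec ((GE * H⁻¹ * GEᵀ)⁻¹.mulVec (WE + SE.mulVec x))) ⬝ᵥ w) ∧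
      SEᵀ.mulVec ((GE * H⁻¹ * GEᵀ)⁻¹.mulVec (WE + SE.mulVec x))
        = -(SEᵀ.mulVec (lamE x)) := by
  set M : Matrix (Fin e) (Fin e) ℝ := GE * H⁻¹ * GEᵀ with hM
  set N : Matrix (Fin e) (Fin e) ℝ := M⁻¹ with hN
  have hHdet : IsUnit H.det := isUnit_iff_ne_zero.mpr hH.det_pos.ne'
  have hMdet : IsUnit M.det := (Matrix.isUnit_iff_isUnit_det M).mp hLICQ
  have hHinvsymm : (H⁻¹).IsSymm := by
    rw [Matrix.IsSymm, Matrix.transpose_nonsing_inv, hHsymm.eq]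
  have hMsymm : M.IsSymm := by
    rw [Matrix.IsSymm, hM]
    rw [Matrix.transpose_mul, Matrix.transpose_mul, Matrix.transpose_transpose,
      hHinvsymm.eq, Matrix.mul_assoc]
  have hNsymm : N.IsSymm := by
    rw [Matrix.IsSymm, hN, Matrix.transpose_nonsing_inv, hMsymm.eq]
  -- key matrix identity
  have hkey : (H⁻¹ * GEᵀ * N)ᵀ * (H * (H⁻¹ * GEᵀ * N)) = N := by
    have h1 : H * (H⁻¹ * GEᵀ * N) = GEᵀ * N := by
      rw [← Matrix.mul_assoc, ← Matrix.mul_assoc, Matrix.mul_nonsing_inv _ hHdet,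
        Matrix.one_mul]
    rw [h1, Matrix.transpose_mul, Matrix.transpose_mul, Matrix.transpose_transpose,
      hNsymm.eq, hHinvsymm.eq]
    calc N * (GE * H⁻¹) * (GEᵀ * N) = N * (GE * H⁻¹ * GEᵀ) * N := by
          simp only [Matrix.mul_assoc]
      _ = N := by rw [← hM, hN, Matrix.nonsing_inv_mul _ hMdet, Matrix.one_mul]
  -- symmetry of N used pointwise
  have hNdot : ∀ u v : Fin e → ℝ, u ⬝ᵥ N *ᵥ v = (N *ᵥ u) ⬝ᵥ v := by
    intro u v
    rw [Matrix.dotProduct_mulVec, ← Matrix.mulVec_transpose, hNsymm.eq]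
  -- Part 1 as a function identity
  have hVeq : V = fun x => (1/2) * ((WE + SE *ᵥ x) ⬝ᵥ N *ᵥ (WE + SE *ᵥ x)) := by
    rw [hV, hzstar]
    funext x
    set v : Fin e → ℝ := WE + SE *ᵥ x
    beta_reduce
    have hz : H⁻¹ *ᵥ GEᵀ *ᵥ N *ᵥ v = (H⁻¹ * GEᵀ * N) *ᵥ v := by
      rw [Matrix.mulVec_mulVec, Matrix.mulVec_mulVec]
    have hkey2 : (H * (H⁻¹ * GEᵀ * N))ᵀ * (H⁻¹ * GEᵀ * N) = N := by
      have : (H * (H⁻¹ * GEᵀ * N))ᵀ * (H⁻¹ * GEᵀ * N)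
          = ((H⁻¹ * GEᵀ * N)ᵀ * (H * (H⁻¹ * GEᵀ * N)))ᵀ := by
        rw [Matrix.transpose_mul ((H⁻¹ * GEᵀ * N)ᵀ) (H * (H⁻¹ * GEᵀ * N)),
          Matrix.transpose_transpose]
      rw [this, hkey, hNsymm.eq]
    rw [hz, Matrix.mulVec_mulVec]
    rw [Matrix.dotProduct_mulVec, ← Matrix.mulVec_transpose, Matrix.mulVec_mulVec,
      hkey2, ← hNdot]
  -- bilinear continuous map
  set B : (Fin e → ℝ) →L[ℝ] (Fin e → ℝ) →L[ℝ] ℝ :=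
    LinearMap.toContinuousLinearMap
    (((LinearMap.toContinuousLinearMap :
        ((Fin e → ℝ) →ₗ[ℝ] ℝ) ≃ₗ[ℝ] ((Fin e → ℝ) →L[ℝ] ℝ)) :
        ((Fin e → ℝ) →ₗ[ℝ] ℝ) →ₗ[ℝ] ((Fin e → ℝ) →L[ℝ] ℝ)).comp
      (Matrix.toLinearMap₂' ℝ N)) with hB
  have hBapp : ∀ u v : Fin e → ℝ, B u v = u ⬝ᵥ N *ᵥ v := by
    intro u v; simp [hB, Matrix.toLinearMap₂'_apply']
  have hbb : IsBoundedBilinearMap ℝ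
      (fun p : (Fin e → ℝ) × (Fin e → ℝ) => p.1 ⬝ᵥ N *ᵥ p.2) := by
    have := B.isBoundedBilinearMap
    simpa only [hBapp] using this
  -- affine map derivative
  set SL : (Fin n → ℝ) →L[ℝ] (Fin e → ℝ) :=
    LinearMap.toContinuousLinearMap SE.mulVecLin with hSL
  intro x
  set v : Fin e → ℝ := WE + SE *ᵥ x with hv
  have hfv : HasFDerivAt (fun y : Fin n → ℝ => WE + SE *ᵥ y) SL x := by
    have h0 : HasFDerivAt (fun y : Fin n → ℝ => SE *ᵥ y) SL x := by
      have := SL.hasFDerivAt (x := x)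
      simpa [hSL] using this
    exact h0.const_add WE
  have hfpair : HasFDerivAt (fun y : Fin n → ℝ => (WE + SE *ᵥ y, WE + SE *ᵥ y))
      (SL.prod SL) x := hfv.prodMk hfv
  have hcomp :
      HasFDerivAt (fun y : Fin n → ℝ => (WE + SE *ᵥ y) ⬝ᵥ N *ᵥ (WE + SE *ᵥ y))
        ((hbb.deriv (v, v)).comp (SL.prod SL)) x := by
    exact (hbb.hasFDerivAt (v, v)).comp x hfpair
  have hVder : HasFDerivAt V ((1/2 : ℝ) • ((hbb.deriv (v, v)).comp (SL.prod SL))) x := by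
    rw [hVeq]
    exact hcomp.const_mul (1/2)
  refine ⟨by rw [hVeq], ⟨_, hVder, ?_⟩, ?_⟩
  · intro w
    have hd : ((1/2 : ℝ) • ((hbb.deriv (v, v)).comp (SL.prod SL))) w
        = (1/2) * (v ⬝ᵥ N *ᵥ (SE *ᵥ w) + (SE *ᵥ w) ⬝ᵥ N *ᵥ v) := by
      simp [hbb.deriv_apply, hSL, smul_eq_mul]
    rw [hd]
    have h1 : v ⬝ᵥ N *ᵥ (SE *ᵥ w) = (N *ᵥ v) ⬝ᵥ (SE *ᵥ w) := hNdot v (SE *ᵥ w)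
    have h2 : (SE *ᵥ w) ⬝ᵥ N *ᵥ v = (N *ᵥ v) ⬝ᵥ (SE *ᵥ w) := by
      rw [dotProduct_comm]
    rw [h1, h2, Matrix.mulVec_transpose, ← Matrix.dotProduct_mulVec]
    ring
  · rw [hlamE]
    simp [Matrix.mulVec_neg, hv]
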